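/- Let γ ∈ SL(3,ℤ) have second row (d,e,f) and third row (A₁,B₁,C₁), and define A₂ = B₁d − A₁e, B₂ = A₁f − C₁d, C₂ = C₁e − B₁f. Then A₁C₂ + B₁B₂ + C₁A₂ = 0, gcd(A₁,B₁,C₁) = 1, and gcd(A₂,B₂,C₂) = 1. -/

import Mathlib

/-- Plücker coordinates of `γ ∈ SL(3,ℤ)`: with `(d,e,f)` the second row,
`(A₁,B₁,C₁)` the third row, and `A₂ = B₁d − A₁e`, `B₂ = A₁f − C₁d`, `C₂ = C₁e − B₁f`,
one has `A₁C₂ + B₁B₂ + C₁A₂ = 0`, `gcd(A₁,B₁,C₁) = 1`, and `gcd(A₂,B₂,C₂) = 1`. -/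
theorem stmt_10 (γ : Matrix (Fin 3) (Fin 3) ℤ) (hγ : γ.det = 1) :
    γ 2 0 * (γ 2 2 * γ 1 1 - γ 2 1 * γ 1 2) +
        γ 2 1 * (γ 2 0 * γ 1 2 - γ 2 2 * γ 1 0) +
        γ 2 2 * (γ 2 1 * γ 1 0 - γ 2 0 * γ 1 1) = 0 ∧
    Int.gcd (Int.gcd (γ 2 0) (γ 2 1)) (γ 2 2) = 1 ∧
    Int.gcd (Int.gcd (γ 2 1 * γ 1 0 - γ 2 0 * γ 1 1) (γ 2 0 * γ 1 2 - γ 2 2 * γ 1 0))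
      (γ 2 2 * γ 1 1 - γ 2 1 * γ 1 2) = 1 := by
  have hd : γ.det =
      γ 0 0 * (γ 2 2 * γ 1 1 - γ 2 1 * γ 1 2) +
      γ 0 1 * (γ 2 0 * γ 1 2 - γ 2 2 * γ 1 0) +
      γ 0 2 * (γ 2 1 * γ 1 0 - γ 2 0 * γ 1 1) := by
    rw [Matrix.det_fin_three]; ring
  refine ⟨by ring, ?_, ?_⟩
  · set g : ℕ := Int.gcd (Int.gcd (γ 2 0) (γ 2 1)) (γ 2 2) with hg
    have h0 : (g : ℤ) ∣ γ 2 0 := (Int.gcd_dvd_left _ _).trans (Int.gcd_dvd_left _ _)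
    have h1 : (g : ℤ) ∣ γ 2 1 := (Int.gcd_dvd_left _ _).trans (Int.gcd_dvd_right _ _)
    have h2 : (g : ℤ) ∣ γ 2 2 := Int.gcd_dvd_right _ _
    have hdet : (g : ℤ) ∣ γ.det := by
      rw [hd]
      exact dvd_add (dvd_add
        (Dvd.dvd.mul_left (dvd_sub (h2.mul_right _) (h1.mul_right _)) _)
        (Dvd.dvd.mul_left (dvd_sub (h0.mul_right _) (h2.mul_right _)) _))
        (Dvd.dvd.mul_left (dvd_sub (h1.mul_right _) (h0.mul_right _)) _)
    rw [hγ] at hdet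
    exact Nat.dvd_one.mp (Int.ofNat_dvd.mp (by exact_mod_cast hdet))
  · set g : ℕ := Int.gcd (Int.gcd (γ 2 1 * γ 1 0 - γ 2 0 * γ 1 1)
      (γ 2 0 * γ 1 2 - γ 2 2 * γ 1 0)) (γ 2 2 * γ 1 1 - γ 2 1 * γ 1 2) with hg
    have h0 : (g : ℤ) ∣ γ 2 1 * γ 1 0 - γ 2 0 * γ 1 1 :=
      (Int.gcd_dvd_left _ _).trans (Int.gcd_dvd_left _ _)
    have h1 : (g : ℤ) ∣ γ 2 0 * γ 1 2 - γ 2 2 * γ 1 0 :=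
      (Int.gcd_dvd_left _ _).trans (Int.gcd_dvd_right _ _)
    have h2 : (g : ℤ) ∣ γ 2 2 * γ 1 1 - γ 2 1 * γ 1 2 := Int.gcd_dvd_right _ _
    have hdet : (g : ℤ) ∣ γ.det := by
      rw [hd]
      exact dvd_add (dvd_add (h2.mul_left _) (h1.mul_left _)) (h0.mul_left _)
    rw [hγ] at hdet
    exact Nat.dvd_one.mp (Int.ofNat_dvd.mp (by exact_mod_cast hdet))
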